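/- Let Σ be a finite connected graph, G ≤ Aut(Σ), and H ≤ G a subgroup acting semiregularly on V(Σ) with exactly two orbits U, W such that no edge of Σ has both endpoints in the same orbit. Suppose H ⊴ N := N_{Aut(Σ)}(H). Then for each vertex v ∈ V(Σ), any element of N_v fixing all neighbours of v fixes every vertex, i.e., the stabiliser N_v acts faithfully on the neighbourhood Σ(v). -/

import Mathlib

/-- Bi-Cayley lemma: let `Sg` be a finite connected graph and `H` a group of
automorphisms of `Sg` (modelled as a subgroup of `Equiv.Perm V` preserving
adjacency) which is semiregular with exactly two orbits `U, W`, neither of which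
contains an edge. Then any element `g` of the normaliser of `H` in `Aut(Sg)` that
fixes a vertex `v` and all its neighbours fixes every vertex. -/
theorem biCayley_normaliser_locally_faithful {V : Type*} [Fintype V]
    (Sg : SimpleGraph V) (hconn : Sg.Connected)
    (H : Subgroup (Equiv.Perm V))
    (hHaut : ∀ h ∈ H, ∀ a b : V, Sg.Adj a b ↔ Sg.Adj (h a) (h b))
    (hsemireg : ∀ h ∈ H, ∀ v : V, h v = v → h = 1)
    (U W : Set V)
    (hdisj : U ∩ W = ∅) (hcover : U ∪ W = Set.univ)
    (hUorb : ∀ u ∈ U, ∀ u' ∈ U, ∃ h ∈ H, h u = u')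
    (hWorb : ∀ w ∈ W, ∀ w' ∈ W, ∃ h ∈ H, h w = w')
    (hUinv : ∀ h ∈ H, ∀ u ∈ U, h u ∈ U)
    (hWinv : ∀ h ∈ H, ∀ w ∈ W, h w ∈ W)
    (hnoedge : ∀ a b : V, Sg.Adj a b → ¬(a ∈ U ∧ b ∈ U) ∧ ¬(a ∈ W ∧ b ∈ W))
    (g : Equiv.Perm V)
    (hgaut : ∀ a b : V, Sg.Adj a b ↔ Sg.Adj (g a) (g b))
    (hgnorm : (∀ h ∈ H, g * h * g⁻¹ ∈ H) ∧ (∀ h ∈ H, g⁻¹ * h * g ∈ H))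
    (v : V) (hgv : g v = v) (hnbrs : ∀ w : V, Sg.Adj v w → g w = w) :
    ∀ u : V, g u = u := by
  -- Property: g fixes u and all neighbours of u.
  set Q : V → Prop := fun u => g u = u ∧ ∀ t : V, Sg.Adj u t → g t = t with hQ
  -- every vertex is in U or W
  have hmem : ∀ a : V, a ∈ U ∨ a ∈ W := by
    intro a
    have : a ∈ U ∪ W := by rw [hcover]; trivial
    exact this
  -- same orbit for vertices at distance 2
  have horb : ∀ u w x : V, Sg.Adj u w → Sg.Adj w x → ∃ h ∈ H, h u = x := by
    intro u w x huw hwx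
    have h1 := hnoedge u w huw
    have h2 := hnoedge w x hwx
    rcases hmem u with hu | hu
    · have hwW : w ∈ W := by
        rcases hmem w with hw | hw
        · exact absurd ⟨hu, hw⟩ h1.1
        · exact hw
      have hxU : x ∈ U := by
        rcases hmem x with hx | hx
        · exact hx
        · exact absurd ⟨hwW, hx⟩ h2.2
      exact hUorb u hu x hxU
    · have hwU : w ∈ U := by
        rcases hmem w with hw | hw
        · exact hw
        · exact absurd ⟨hu, hw⟩ h1.2
      have hxW : x ∈ W := by
        rcases hmem x with hx | hx
        · exact absurd ⟨hwU, hx⟩ h2.1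
        · exact hx
      exact hWorb u hu x hxW
  -- key step: Q propagates along edges
  have hstep : ∀ u w : V, Q u → Sg.Adj u w → Q w := by
    intro u w hQu huw
    obtain ⟨hgu, hfix⟩ := hQu
    refine ⟨hfix w huw, ?_⟩
    intro x hwx
    obtain ⟨h, hh, hhu⟩ := horb u w x huw hwx
    -- h⁻¹ w is a neighbour of u
    have hadj : Sg.Adj u (h⁻¹ w) := by
      have := (hHaut h⁻¹ (inv_mem hh) w x).mp hwx
      have hx : h⁻¹ x = u := by
        rw [← hhu]; simp
      rw [hx] at this
      exact this.symm
    have hfix1 : g (h⁻¹ w) = h⁻¹ w := hfix _ hadj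
    have hfixw : g w = w := hfix w huw
    -- m := h⁻¹ * (g⁻¹ * h * g) fixes h⁻¹ w and lies in H
    have hm : h⁻¹ * (g⁻¹ * h * g) ∈ H := mul_mem (inv_mem hh) (hgnorm.2 h hh)
    have hmfix : (h⁻¹ * (g⁻¹ * h * g)) (h⁻¹ w) = h⁻¹ w := by
      have hgw : g⁻¹ w = w := by
        rw [Equiv.Perm.inv_eq_iff_eq]; exact hfixw.symm
      simp only [Equiv.Perm.mul_apply]
      rw [hfix1]
      rw [show h (h⁻¹ w) = w from h.apply_symm_apply w]
      rw [hgw]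
    have hm1 : h⁻¹ * (g⁻¹ * h * g) = 1 := hsemireg _ hm _ hmfix
    -- so g commutes with h
    have hconj : g⁻¹ * h * g = h := by
      have := congrArg (fun z => h * z) hm1
      simpa [mul_assoc] using this
    have hcomm : g * h = h * g := by
      have := congrArg (fun z => g * z) hconj
      simpa [mul_assoc] using this.symm
    -- conclude g x = x
    calc g x = g (h u) := by rw [hhu]
      _ = (g * h) u := rfl
      _ = (h * g) u := by rw [hcomm]
      _ = h (g u) := rfl
      _ = h u := by rw [hgu]
      _ = x := hhu
  -- propagate Q along walks from v
  have hQv : Q v := ⟨hgv, hnbrs⟩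
  have hwalk : ∀ (a b : V) (_ : Sg.Walk a b), Q a → Q b := by
    intro a b p
    induction p with
    | nil => exact id
    | cons hab _ ih => intro hQa; exact ih (hstep _ _ hQa hab)
  intro u
  obtain ⟨p⟩ := hconn v u
  exact (hwalk v u p hQv).1
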